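/- Let M be a finite set, V = {v_1, …, v_n} a family of valuations v_i : 2^M → ℝ, and χ : M → [n] an n-coloring of M with color classes B_1, …, B_n. Let σ be a permutation of [n] maximizing ∑_{i=1}^n v_i(B_{σ(i)}), and set A_i = B_{σ(i)}. Then the allocation A = (A_1, …, A_n) is envy-freeable, and the minimal payments p_i (the maximum weight of a simple path starting at i in the envy graph G_A) satisfy p_i ≤ disc(V, n, χ) for every i. -/

import Mathlib

/-- The total weight of the path visiting the vertices of `l` in order
(the empty or one-vertex path has weight `0`). -/
def pathWeight {n : ℕ} (w : Fin n → Fin n → ℝ) (l : List (Fin n)) : ℝ :=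
  ((l.zip l.tail).map fun q => w q.1 q.2).sum

/-- The discrepancy of the family `v` with respect to the `k`-coloring `χ`:
`max_{ℓ,ℓ'} max_i |v i (χ⁻¹ ℓ) - v i (χ⁻¹ ℓ')|`. -/
noncomputable def discWrt {α : Type*} [Fintype α] [DecidableEq α] {n k : ℕ}
    (v : Fin n → Finset α → ℝ) (χ : α → Fin k) : ℝ :=
  ⨆ ℓ : Fin k, ⨆ ℓ' : Fin k, ⨆ i : Fin n,
    |v i (Finset.univ.filter fun j => χ j = ℓ) -
      v i (Finset.univ.filter fun j => χ j = ℓ')|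

lemma pathWeight_singleton {n : ℕ} (w : Fin n → Fin n → ℝ) (a : Fin n) :
    pathWeight w [a] = 0 := by simp [pathWeight]

lemma pathWeight_cons_cons {n : ℕ} (w : Fin n → Fin n → ℝ) (a b : Fin n) (t : List (Fin n)) :
    pathWeight w (a :: b :: t) = w a b + pathWeight w (b :: t) := by
  simp [pathWeight]

lemma pathWeight_append {n : ℕ} (w : Fin n → Fin n → ℝ) (s : List (Fin n)) (i : Fin n)
    (t : List (Fin n)) :
    pathWeight w (s ++ i :: t) = pathWeight w (s ++ [i]) + pathWeight w (i :: t) := by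
  induction s with
  | nil => simp [pathWeight_singleton]
  | cons a s ih =>
    cases s with
    | nil => simp [pathWeight_cons_cons, pathWeight_singleton]
    | cons b s' =>
      simp only [List.cons_append] at ih ⊢
      rw [pathWeight_cons_cons, pathWeight_cons_cons, ih]
      ring

lemma pathWeight_concat {n : ℕ} (w : Fin n → Fin n → ℝ) :
    ∀ (s : List (Fin n)) (hs : s ≠ []) (i : Fin n),
      pathWeight w (s ++ [i]) = pathWeight w s + w (s.getLast hs) i
  | [], hs, _ => absurd rfl hs
  | [a], _, i => by simp [pathWeight_singleton, pathWeight_cons_cons]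
  | a :: b :: s', _, i => by
    have hrec := pathWeight_concat w (b :: s') (List.cons_ne_nil _ _) i
    simp only [List.cons_append] at hrec ⊢
    rw [pathWeight_cons_cons, pathWeight_cons_cons, hrec,
      List.getLast_cons (List.cons_ne_nil b s')]
    ring

lemma sum_formPerm {n : ℕ} (w : Fin n → Fin n → ℝ) (hw : ∀ i, w i i = 0) :
    ∀ (l : List (Fin n)) (hne : l ≠ []) (_ : l.Nodup),
      ∑ i, w i (l.formPerm i) = pathWeight w l + w (l.getLast hne) (l.head hne)
  | [], hne, _ => absurd rfl hne
  | [a], _, _ => by simp [hw, pathWeight_singleton]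
  | a :: b :: t, _, hl => by
    set c := List.formPerm (b :: t) with hc
    have ha : a ∉ b :: t := (List.nodup_cons.mp hl).1
    have hnd : (b :: t).Nodup := (List.nodup_cons.mp hl).2
    have hca : c a = a := List.formPerm_apply_of_notMem ha
    set L := (b :: t).getLast (List.cons_ne_nil _ _) with hLdef
    have hcL : c L = b := List.formPerm_apply_getLast b t
    have hLmem : L ∈ b :: t := List.getLast_mem _
    have haL : a ≠ L := fun h => ha (h ▸ hLmem)
    have happ : ∀ i : Fin n, (a :: b :: t).formPerm i = Equiv.swap a b (c i) := by
      intro i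
      rw [List.formPerm_cons_cons, Equiv.Perm.mul_apply]
    have key : ∀ i : Fin n, w i (Equiv.swap a b (c i)) =
        w i (c i) + ((if i = a then w a b - w a a else 0) +
          (if i = L then w L a - w L b else 0)) := by
      intro i
      by_cases hia : i = a
      · subst hia
        rw [if_pos rfl, if_neg haL, hca, Equiv.swap_apply_left]
        ring
      · by_cases hiL : i = L
        · subst hiL
          rw [if_neg hia, if_pos rfl, hcL, Equiv.swap_apply_right]
          ring
        · rw [if_neg hia, if_neg hiL]
          have h1 : c i ≠ a := fun h => hia (c.injective (h.trans hca.symm))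
          have h2 : c i ≠ b := fun h => hiL (c.injective (h.trans hcL.symm))
          rw [Equiv.swap_apply_of_ne_of_ne h1 h2]
          ring
    have hIH := sum_formPerm w hw (b :: t) (List.cons_ne_nil _ _) hnd
    calc ∑ i, w i ((a :: b :: t).formPerm i)
        = ∑ i, (w i (c i) + ((if i = a then w a b - w a a else 0) +
            (if i = L then w L a - w L b else 0))) := by
          refine Finset.sum_congr rfl fun i _ => ?_
          rw [happ i, key i]
      _ = (∑ i, w i (c i)) + ((w a b - w a a) + (w L a - w L b)) := by
          rw [Finset.sum_add_distrib, Finset.sum_add_distrib]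
          simp [Finset.sum_ite_eq']
      _ = pathWeight w (a :: b :: t) +
            w ((a :: b :: t).getLast (List.cons_ne_nil _ _))
              ((a :: b :: t).head (List.cons_ne_nil _ _)) := by
          rw [hIH, pathWeight_cons_cons, hw a]
          have hgl : (a :: b :: t).getLast (List.cons_ne_nil _ _) = L := by
            rw [List.getLast_cons (List.cons_ne_nil b t)]
          rw [hgl]
          simp only [List.head_cons]
          ring

/-- **Welfare-maximizing reassignment of a low-discrepancy partition.**
Let `χ` be an `n`-coloring of the items with color classes `B ℓ = χ⁻¹ ℓ`, and let
`σ` be a permutation maximizing `∑ i, v i (B (σ i))`; set `A i = B (σ i)`. Then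
the allocation `A` is envy-freeable, and the minimal payments `p i`—the maximum
weight of a simple path starting at `i` in the envy graph `G_A`—satisfy
`p i ≤ disc(V, n, χ)` for every agent `i`. -/
theorem welfare_max_reassignment_payments_le_disc
    {α : Type*} [Fintype α] [DecidableEq α] {n : ℕ}
    (v : Fin n → Finset α → ℝ) (χ : α → Fin n)
    (B : Fin n → Finset α)
    (hB : ∀ ℓ : Fin n, B ℓ = Finset.univ.filter fun j => χ j = ℓ)
    (σ : Equiv.Perm (Fin n))
    (hσ : ∀ τ : Equiv.Perm (Fin n), ∑ i, v i (B (τ i)) ≤ ∑ i, v i (B (σ i)))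
    (A : Fin n → Finset α) (hA : ∀ i, A i = B (σ i)) :
    (∃ p : Fin n → ℝ, (∀ i, 0 ≤ p i) ∧
        ∀ i j : Fin n, v i (A j) + p j ≤ v i (A i) + p i) ∧
    (∀ p : Fin n → ℝ,
      (∀ i : Fin n,
        IsGreatest {x : ℝ | ∃ l : List (Fin n), l.Nodup ∧ l.head? = some i ∧
          pathWeight (fun i j => v i (A j) - v i (A i)) l = x} (p i)) →
      ∀ i : Fin n, p i ≤ discWrt v χ) := by
  set w : Fin n → Fin n → ℝ := fun i j => v i (A j) - v i (A i) with hwdef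
  have hw0 : ∀ i, w i i = 0 := fun i => sub_self _
  have hcyc : ∀ c : Equiv.Perm (Fin n), ∑ i, w i (c i) ≤ 0 := by
    intro c
    have h := hσ (σ * c)
    simp only [Equiv.Perm.mul_apply] at h
    have he : ∑ i, w i (c i) = (∑ i, v i (B (σ (c i)))) - ∑ i, v i (B (σ i)) := by
      rw [← Finset.sum_sub_distrib]
      exact Finset.sum_congr rfl fun i _ => by rw [hwdef]; simp [hA]
    linarith
  have hcycle : ∀ (l : List (Fin n)) (hne : l ≠ []), l.Nodup →
      pathWeight w l + w (l.getLast hne) (l.head hne) ≤ 0 := by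
    intro l hne hl
    rw [← sum_formPerm w hw0 l hne hl]
    exact hcyc _
  constructor
  · -- existence of envy-eliminating payments
    set S : Fin n → Set ℝ := fun i =>
      {x | ∃ l : List (Fin n), l.Nodup ∧ l.head? = some i ∧ pathWeight w l = x} with hS
    have hSfin : ∀ i, (S i).Finite := by
      intro i
      have hsub : S i ⊆ (fun l => pathWeight w l) '' {l : List (Fin n) | l.length ≤ n} := by
        rintro x ⟨l, hl, _, rfl⟩
        exact ⟨l, by simpa using hl.length_le_card, rfl⟩
      exact ((List.finite_length_le (Fin n) n).image _).subset hsub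
    have hmem0 : ∀ i : Fin n, (0 : ℝ) ∈ S i :=
      fun i => ⟨[i], List.nodup_singleton i, rfl, pathWeight_singleton w i⟩
    have hgr : ∀ i : Fin n, ∃ m, IsGreatest (S i) m := by
      intro i
      obtain ⟨m, hm, hub⟩ := Finset.exists_max_image (hSfin i).toFinset id
        ⟨0, (hSfin i).mem_toFinset.mpr (hmem0 i)⟩
      exact ⟨m, (hSfin i).mem_toFinset.mp hm,
        fun x hx => hub x ((hSfin i).mem_toFinset.mpr hx)⟩
    choose p hp using hgr
    refine ⟨p, fun i => (hp i).2 (hmem0 i), ?_⟩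
    intro i j
    suffices h : w i j + p j ≤ p i by
      have hwe : w i j = v i (A j) - v i (A i) := rfl
      linarith
    obtain ⟨l, hl, hh, hpw⟩ := (hp j).1
    cases l with
    | nil => simp at hh
    | cons a tt =>
    obtain rfl : a = j := by simpa using hh
    by_cases hi : i ∈ a :: tt
    · obtain ⟨s, t', hst⟩ := List.append_of_mem hi
      cases s with
      | nil =>
        obtain ⟨h1, -⟩ : a = i ∧ tt = t' := by
          simpa using hst
        rw [h1, hw0, zero_add]
      | cons b s'' =>
        simp only [List.cons_append, List.cons.injEq] at hst
        obtain ⟨rfl, rfl⟩ := hst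
        -- now the list is a :: (s'' ++ i :: t'), with a = j
        have hnd : (a :: s'').Nodup ∧ (i :: t').Nodup ∧
            (a :: s'').Disjoint (i :: t') := by
          have := hl
          rw [show a :: (s'' ++ i :: t') = (a :: s'') ++ (i :: t') by simp,
            List.nodup_append] at this
          exact ⟨this.1, this.2.1, fun x hx hx' => this.2.2 x hx x hx' rfl⟩
        have hinotin : i ∉ a :: s'' := fun h => hnd.2.2 h List.mem_cons_self
        have hmnd : (i :: a :: s'').Nodup := List.nodup_cons.mpr ⟨hinotin, hnd.1⟩
        have hcm := hcycle (i :: a :: s'') (List.cons_ne_nil _ _) hmnd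
        rw [pathWeight_cons_cons, List.getLast_cons (List.cons_ne_nil a s'')] at hcm
        simp only [List.head_cons] at hcm
        -- hcm : w i a + pathWeight w (a :: s'') + w ((a::s'').getLast _) i ≤ 0
        have hsplit : pathWeight w (a :: (s'' ++ i :: t')) =
            pathWeight w (a :: s'') + w ((a :: s'').getLast (List.cons_ne_nil a s'')) i +
              pathWeight w (i :: t') := by
          rw [show a :: (s'' ++ i :: t') = (a :: s'') ++ i :: t' by simp,
            pathWeight_append, pathWeight_concat w (a :: s'') (List.cons_ne_nil a s'') i]
        have hmem : pathWeight w (i :: t') ∈ S i := ⟨i :: t', hnd.2.1, rfl, rfl⟩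
        have hle := (hp i).2 hmem
        rw [hsplit] at hpw
        linarith
    · have hnod : (i :: a :: tt).Nodup := List.nodup_cons.mpr ⟨hi, hl⟩
      have hmem : w i a + p a ∈ S i := by
        refine ⟨i :: a :: tt, hnod, rfl, ?_⟩
        rw [pathWeight_cons_cons, hpw]
      exact (hp i).2 hmem
  · -- payments bounded by discrepancy
    intro p hp i
    have hdisc : ∀ (k ℓ ℓ' : Fin n), v k (B ℓ) - v k (B ℓ') ≤ discWrt v χ := by
      intro k ℓ ℓ'
      have h1 : v k (B ℓ) - v k (B ℓ') ≤
          |v k (Finset.univ.filter fun j => χ j = ℓ) -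
            v k (Finset.univ.filter fun j => χ j = ℓ')| := by
        rw [hB ℓ, hB ℓ']; exact le_abs_self _
      refine h1.trans ?_
      unfold discWrt
      calc |v k (Finset.univ.filter fun j => χ j = ℓ) -
            v k (Finset.univ.filter fun j => χ j = ℓ')|
          ≤ ⨆ i : Fin n, |v i (Finset.univ.filter fun j => χ j = ℓ) -
              v i (Finset.univ.filter fun j => χ j = ℓ')| :=
            le_ciSup (f := fun i : Fin n =>
              |v i (Finset.univ.filter fun j => χ j = ℓ) -
                v i (Finset.univ.filter fun j => χ j = ℓ')|)
              (Set.finite_range _).bddAbove k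
        _ ≤ ⨆ ℓ'' : Fin n, ⨆ i : Fin n, |v i (Finset.univ.filter fun j => χ j = ℓ) -
              v i (Finset.univ.filter fun j => χ j = ℓ'')| :=
            le_ciSup (f := fun L : Fin n => ⨆ i : Fin n,
              |v i (Finset.univ.filter fun j => χ j = ℓ) -
                v i (Finset.univ.filter fun j => χ j = L)|)
              (Set.finite_range _).bddAbove ℓ'
        _ ≤ ⨆ ℓ''' : Fin n, ⨆ ℓ'' : Fin n, ⨆ i : Fin n,
              |v i (Finset.univ.filter fun j => χ j = ℓ''') -
                v i (Finset.univ.filter fun j => χ j = ℓ'')| :=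
            le_ciSup (f := fun L : Fin n => ⨆ ℓ'' : Fin n, ⨆ i : Fin n,
              |v i (Finset.univ.filter fun j => χ j = L) -
                v i (Finset.univ.filter fun j => χ j = ℓ'')|)
              (Set.finite_range _).bddAbove ℓ
    obtain ⟨l, hl, hh, hpw⟩ := (hp i).1
    cases l with
    | nil => simp at hh
    | cons a tt =>
    obtain rfl : a = i := by simpa using hh
    have hc := hcycle (a :: tt) (List.cons_ne_nil _ _) hl
    simp only [List.head_cons] at hc
    set L := (a :: tt).getLast (List.cons_ne_nil _ _) with hL
    have hwL : w L a = v L (B (σ a)) - v L (B (σ L)) := by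
      rw [hwdef]; simp [hA]
    have hd := hdisc L (σ L) (σ a)
    linarith
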